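/- arXiv:2211.14807 — 4 statements merged into one kernel-verified Lean document; each statement's English description precedes it below -/
import Mathlib

section
/- For every closed curve γ of length 2, the widths satisfy d₀(γ) + d_{π/3}(γ) + d_{2π/3}(γ) ≤ 2, where for θ ∈ ℝ, d_θ(γ) = sup_{s,t ∈ [0,1]} Im(e^{−iθ}(γ(s) − γ(t))) is the width of the minimum-width slab of orientation θ (bounded by two parallel lines of slope θ) containing the image of γ. -/
open Set MeasureTheory

/-- A closed curve of length 2: continuous on `[0,1]`, closed, with total variation 2. -/
def IsClosedCurve2 (γ : ℝ → ℂ) : Prop :=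
  ContinuousOn γ (Set.Icc 0 1) ∧ γ 0 = γ 1 ∧ eVariationOn γ (Set.Icc 0 1) = 2

/-- The width of the minimum-width slab of orientation θ containing the image of γ:
`sup_{s,t ∈ [0,1]} Im(e^{−iθ}(γ(s) − γ(t)))`. -/
noncomputable def slabWidth (γ : ℝ → ℂ) (θ : ℝ) : ℝ :=
  sSup ((fun p : ℝ × ℝ =>
    (Complex.exp (-(θ : ℂ) * Complex.I) * (γ p.1 - γ p.2)).im) ''
      (Set.Icc 0 1 ×ˢ Set.Icc 0 1))

/- ### Auxiliary lemmas -/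

lemma im_exp_mul (θ : ℝ) (v : ℂ) :
    (Complex.exp (-(θ : ℂ) * Complex.I) * v).im = Real.cos θ * v.im - Real.sin θ * v.re := by
  have h : -(θ:ℂ) * Complex.I = ((-θ : ℝ) : ℂ) * Complex.I := by push_cast; ring
  rw [h, Complex.exp_mul_I]
  simp [Complex.add_im, Complex.mul_im, Complex.add_re, Complex.mul_re,
    Complex.cos_ofReal_re, Complex.sin_ofReal_re, Real.cos_neg, Real.sin_neg]
  ring

lemma abs_im_exp_mul_le (θ : ℝ) (v : ℂ) :
    |(Complex.exp (-(θ:ℂ) * Complex.I) * v).im| ≤ ‖v‖ := by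
  calc |(Complex.exp (-(θ:ℂ) * Complex.I) * v).im|
      ≤ ‖Complex.exp (-(θ:ℂ) * Complex.I) * v‖ := Complex.abs_im_le_norm _
    _ = ‖v‖ := by
        rw [norm_mul, Complex.norm_exp]; simp

lemma abs3 {a b m : ℝ} (h1 : |a| ≤ m) (h2 : |b| ≤ m) (h3 : |a+b| ≤ m) :
    |a| + |a+b| + |b| ≤ 2*m := by
  rcases abs_cases a with ⟨e1,s1⟩|⟨e1,s1⟩ <;> rcases abs_cases b with ⟨e2,s2⟩|⟨e2,s2⟩ <;>
    rcases abs_cases (a+b) with ⟨e3,s3⟩|⟨e3,s3⟩ <;>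
    simp only [e1, e2, e3] at h1 h2 h3 ⊢ <;> linarith

lemma im_split (v : ℂ) :
    (Complex.exp (-(↑(Real.pi/3) : ℂ) * Complex.I) * v).im =
      (Complex.exp (-((0:ℝ) : ℂ) * Complex.I) * v).im +
      (Complex.exp (-(↑(2*Real.pi/3) : ℂ) * Complex.I) * v).im := by
  rw [im_exp_mul, im_exp_mul, im_exp_mul]
  have hc : Real.cos (2*Real.pi/3) = -(1/2) := by
    rw [show 2*Real.pi/3 = Real.pi - Real.pi/3 by ring, Real.cos_pi_sub, Real.cos_pi_div_three]
  have hs : Real.sin (2*Real.pi/3) = Real.sqrt 3 / 2 := by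
    rw [show 2*Real.pi/3 = Real.pi - Real.pi/3 by ring, Real.sin_pi_sub, Real.sin_pi_div_three]
  rw [Real.cos_pi_div_three, Real.sin_pi_div_three, hc, hs, Real.cos_zero, Real.sin_zero]
  ring

lemma key_pointwise (v : ℂ) :
    |(Complex.exp (-((0:ℝ) : ℂ) * Complex.I) * v).im| +
      |(Complex.exp (-(↑(Real.pi/3) : ℂ) * Complex.I) * v).im| +
      |(Complex.exp (-(↑(2*Real.pi/3) : ℂ) * Complex.I) * v).im| ≤ 2 * ‖v‖ := by
  rw [im_split v]
  exact abs3 (abs_im_exp_mul_le 0 v) (abs_im_exp_mul_le (2*Real.pi/3) v)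
    (by rw [← im_split v]; exact abs_im_exp_mul_le (Real.pi/3) v)

lemma chain {u : ℕ → ℝ} {g : ℝ → ℝ} {N i j : ℕ} (hij : i ≤ j) (hjN : j ≤ N)
    (hcl : g (u 0) = g (u N)) :
    2 * |g (u j) - g (u i)| ≤ ∑ k ∈ Finset.range N, dist (g (u k)) (g (u (k+1))) := by
  have d1 : dist (g (u 0)) (g (u i)) ≤
      ∑ k ∈ Finset.Ico 0 i, dist (g (u k)) (g (u (k+1))) :=
    dist_le_Ico_sum_dist (fun k => g (u k)) (Nat.zero_le i)
  have d2 : dist (g (u i)) (g (u j)) ≤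
      ∑ k ∈ Finset.Ico i j, dist (g (u k)) (g (u (k+1))) :=
    dist_le_Ico_sum_dist (fun k => g (u k)) hij
  have d3 : dist (g (u j)) (g (u N)) ≤
      ∑ k ∈ Finset.Ico j N, dist (g (u k)) (g (u (k+1))) :=
    dist_le_Ico_sum_dist (fun k => g (u k)) hjN
  have e1 : (∑ k ∈ Finset.Ico 0 i, dist (g (u k)) (g (u (k+1)))) +
      (∑ k ∈ Finset.Ico i j, dist (g (u k)) (g (u (k+1)))) =
      ∑ k ∈ Finset.Ico 0 j, dist (g (u k)) (g (u (k+1))) :=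
    Finset.sum_Ico_consecutive _ (Nat.zero_le i) hij
  have e2 : (∑ k ∈ Finset.Ico 0 j, dist (g (u k)) (g (u (k+1)))) +
      (∑ k ∈ Finset.Ico j N, dist (g (u k)) (g (u (k+1)))) =
      ∑ k ∈ Finset.Ico 0 N, dist (g (u k)) (g (u (k+1))) :=
    Finset.sum_Ico_consecutive _ (Nat.zero_le j) hjN
  have e3 : ∑ k ∈ Finset.Ico 0 N, dist (g (u k)) (g (u (k+1))) =
      ∑ k ∈ Finset.range N, dist (g (u k)) (g (u (k+1))) := by
    rw [Finset.range_eq_Ico]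
  have A : |g (u j) - g (u i)| ≤ dist (g (u i)) (g (u j)) := by
    rw [dist_comm, Real.dist_eq]
  have B : |g (u j) - g (u i)| ≤ dist (g (u 0)) (g (u i)) + dist (g (u j)) (g (u N)) := by
    have h : g (u j) - g (u i) = (g (u j) - g (u N)) + (g (u 0) - g (u i)) := by
      rw [hcl]; ring
    rw [h]
    calc |(g (u j) - g (u N)) + (g (u 0) - g (u i))|
        ≤ |g (u j) - g (u N)| + |g (u 0) - g (u i)| := abs_add_le _ _
      _ = dist (g (u 0)) (g (u i)) + dist (g (u j)) (g (u N)) := by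
          rw [Real.dist_eq, Real.dist_eq]; ring
  linarith

lemma chain' {u : ℕ → ℝ} {g : ℝ → ℝ} {N i j : ℕ} (hiN : i ≤ N) (hjN : j ≤ N)
    (hcl : g (u 0) = g (u N)) :
    2 * (g (u i) - g (u j)) ≤ ∑ k ∈ Finset.range N, dist (g (u k)) (g (u (k+1))) := by
  rcases le_total i j with h | h
  · have h1 : 2 * (g (u i) - g (u j)) ≤ 2 * |g (u j) - g (u i)| := by
      rw [abs_sub_comm]; nlinarith [le_abs_self (g (u i) - g (u j))]
    exact h1.trans (chain h hjN hcl)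
  · have h1 : 2 * (g (u i) - g (u j)) ≤ 2 * |g (u i) - g (u j)| := by
      nlinarith [le_abs_self (g (u i) - g (u j))]
    exact h1.trans (chain h hiN hcl)

lemma slab_attained (γ : ℝ → ℂ) (hcont : ContinuousOn γ (Icc 0 1)) (θ : ℝ) :
    ∃ s ∈ Icc (0:ℝ) 1, ∃ t ∈ Icc (0:ℝ) 1,
      slabWidth γ θ = (Complex.exp (-(θ:ℂ)*Complex.I) * (γ s - γ t)).im := by
  have hK : IsCompact (Icc (0:ℝ) 1 ×ˢ Icc (0:ℝ) 1) := isCompact_Icc.prod isCompact_Icc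
  have hne : (Icc (0:ℝ) 1 ×ˢ Icc (0:ℝ) 1).Nonempty :=
    ⟨(0,0), by constructor <;> exact ⟨le_refl 0, zero_le_one⟩⟩
  have hco : ContinuousOn (fun p : ℝ×ℝ =>
      (Complex.exp (-(θ:ℂ)*Complex.I) * (γ p.1 - γ p.2)).im)
      (Icc (0:ℝ) 1 ×ˢ Icc (0:ℝ) 1) := by
    apply Complex.continuous_im.comp_continuousOn
    apply ContinuousOn.mul continuousOn_const
    exact (hcont.comp continuousOn_fst fun p hp => hp.1).sub
      (hcont.comp continuousOn_snd fun p hp => hp.2)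
  have hmem := (hK.image_of_continuousOn hco).sSup_mem (hne.image _)
  obtain ⟨p, hp, hpe⟩ := hmem
  exact ⟨p.1, hp.1, p.2, hp.2, hpe.symm⟩

/-- For any closed curve of length 2, `d₀ + d_{π/3} + d_{2π/3} ≤ 2`. -/
theorem width_sum_le_two (γ : ℝ → ℂ) (hγ : IsClosedCurve2 γ) :
    slabWidth γ 0 + slabWidth γ (Real.pi / 3) + slabWidth γ (2 * Real.pi / 3) ≤ 2 := by
  classical
  obtain ⟨hcont, hcl, hvar⟩ := hγ
  obtain ⟨s₁, hs₁, t₁, ht₁, hw₁⟩ := slab_attained γ hcont 0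
  obtain ⟨s₂, hs₂, t₂, ht₂, hw₂⟩ := slab_attained γ hcont (Real.pi/3)
  obtain ⟨s₃, hs₃, t₃, ht₃, hw₃⟩ := slab_attained γ hcont (2*Real.pi/3)
  set g : ℝ → ℝ → ℝ := fun θ x => (Complex.exp (-(θ:ℂ) * Complex.I) * γ x).im with hg
  have hgd : ∀ (θ x y : ℝ),
      (Complex.exp (-(θ:ℂ) * Complex.I) * (γ x - γ y)).im = g θ x - g θ y := by
    intro θ x y; simp [hg, mul_sub]
  -- the partition through all relevant points
  set P : Finset ℝ := {0, 1, s₁, t₁, s₂, t₂, s₃, t₃} with hP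
  have h0P : (0:ℝ) ∈ P := by simp [hP]
  have h1P : (1:ℝ) ∈ P := by simp [hP]
  set l := P.sort (· ≤ ·) with hldef
  have hlen : 0 < l.length := by
    rw [hldef, Finset.length_sort]; exact Finset.card_pos.mpr ⟨0, h0P⟩
  set N := l.length - 1 with hN
  have hNlt : N < l.length := Nat.sub_lt hlen one_pos
  set u : ℕ → ℝ := fun k => l.getD (min k N) 0 with hu
  have hgetlt : ∀ k : ℕ, min k N < l.length := fun k =>
    lt_of_le_of_lt (min_le_right _ _) hNlt
  have huget : ∀ k : ℕ, u k = l[min k N]'(hgetlt k) := fun k =>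
    List.getD_eq_getElem l 0 (hgetlt k)
  have hsorted : l.Pairwise (· ≤ ·) := P.pairwise_sort (· ≤ ·)
  have hPIcc : ∀ x ∈ P, x ∈ Icc (0:ℝ) 1 := by
    intro x hx
    simp only [hP, Finset.mem_insert, Finset.mem_singleton] at hx
    rcases hx with rfl|rfl|rfl|rfl|rfl|rfl|rfl|rfl <;>
      first
        | exact left_mem_Icc.mpr zero_le_one
        | exact right_mem_Icc.mpr zero_le_one
        | assumption
  have huk : ∀ k, u k ∈ Icc (0:ℝ) 1 := by
    intro k
    rw [huget k]
    exact hPIcc _ ((Finset.mem_sort (α := ℝ) (· ≤ ·)).mp (l.getElem_mem _))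
  have hmono : Monotone u := by
    intro a b hab
    rw [huget a, huget b]
    exact hsorted.rel_get_of_le (a := ⟨min a N, hgetlt a⟩) (b := ⟨min b N, hgetlt b⟩)
      (by simpa using min_le_min_right N hab)
  have hidx : ∀ x ∈ P, ∃ i ≤ N, u i = x := by
    intro x hx
    have hxl : x ∈ l := (Finset.mem_sort (α := ℝ) (· ≤ ·)).mpr hx
    obtain ⟨i, hi⟩ := List.mem_iff_get.1 hxl
    have hle : (i:ℕ) ≤ N := Nat.le_sub_one_of_lt i.isLt
    refine ⟨i, hle, ?_⟩
    show l.getD ((i:ℕ) ⊓ N) 0 = x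
    rw [min_eq_left hle, List.getD_eq_getElem l 0 i.isLt]
    simpa using hi
  have hu0 : u 0 = 0 := by
    have h2 : P.min' ⟨0, h0P⟩ = 0 := le_antisymm (P.min'_le 0 h0P)
      (P.le_min' _ _ fun y hy => (hPIcc y hy).1)
    show l.getD (0 ⊓ N) 0 = 0
    rw [Nat.zero_min, List.getD_eq_getElem l 0 hlen]
    exact (Finset.sorted_zero_eq_min'_aux P hlen ⟨0, h0P⟩).trans h2
  have huN : u N = 1 := by
    have h2 : P.max' ⟨0, h0P⟩ = 1 := le_antisymm
      (P.max'_le _ _ fun y hy => (hPIcc y hy).2) (P.le_max' 1 h1P)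
    show l.getD (N ⊓ N) 0 = 1
    rw [min_self, List.getD_eq_getElem l 0 hNlt]
    exact (Finset.sorted_last_eq_max'_aux P hNlt ⟨0, h0P⟩).trans h2
  -- closure of each projected curve
  have hclosed : ∀ θ : ℝ, g θ (u 0) = g θ (u N) := by
    intro θ; rw [hu0, huN]; simp only [hg]; rw [hcl]
  -- bound each width by the projected partition sum
  have bound : ∀ (θ s t : ℝ), s ∈ P → t ∈ P →
      2 * (g θ s - g θ t) ≤ ∑ k ∈ Finset.range N, dist (g θ (u k)) (g θ (u (k+1))) := by
    intro θ s t hsP htP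
    obtain ⟨i, hiN, hui⟩ := hidx s hsP
    obtain ⟨j, hjN, huj⟩ := hidx t htP
    have := chain' (u := u) (g := g θ) hiN hjN (hclosed θ)
    rwa [hui, huj] at this
  have hs₁P : s₁ ∈ P := by simp [hP]
  have ht₁P : t₁ ∈ P := by simp [hP]
  have hs₂P : s₂ ∈ P := by simp [hP]
  have ht₂P : t₂ ∈ P := by simp [hP]
  have hs₃P : s₃ ∈ P := by simp [hP]
  have ht₃P : t₃ ∈ P := by simp [hP]
  have c₁ := bound 0 s₁ t₁ hs₁P ht₁P
  have c₂ := bound (Real.pi/3) s₂ t₂ hs₂P ht₂P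
  have c₃ := bound (2*Real.pi/3) s₃ t₃ hs₃P ht₃P
  rw [hgd] at hw₁ hw₂ hw₃
  -- pointwise comparison of the three projected increments with the curve increment
  have hpt : ∀ k : ℕ,
      dist (g 0 (u k)) (g 0 (u (k+1))) +
        dist (g (Real.pi/3) (u k)) (g (Real.pi/3) (u (k+1))) +
        dist (g (2*Real.pi/3) (u k)) (g (2*Real.pi/3) (u (k+1))) ≤
      2 * dist (γ (u k)) (γ (u (k+1))) := by
    intro k
    have hv : ∀ θ:ℝ, dist (g θ (u k)) (g θ (u (k+1))) =
        |(Complex.exp (-(θ:ℂ)*Complex.I) * (γ (u k) - γ (u (k+1)))).im| := by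
      intro θ; rw [Real.dist_eq, hgd]
    rw [hv 0, hv (Real.pi/3), hv (2*Real.pi/3), Complex.dist_eq]
    exact key_pointwise _
  have hsum3 :
      (∑ k ∈ Finset.range N, dist (g 0 (u k)) (g 0 (u (k+1)))) +
        (∑ k ∈ Finset.range N, dist (g (Real.pi/3) (u k)) (g (Real.pi/3) (u (k+1)))) +
        (∑ k ∈ Finset.range N, dist (g (2*Real.pi/3) (u k)) (g (2*Real.pi/3) (u (k+1)))) ≤
      2 * ∑ k ∈ Finset.range N, dist (γ (u k)) (γ (u (k+1))) := by
    rw [Finset.mul_sum, ← Finset.sum_add_distrib, ← Finset.sum_add_distrib]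
    exact Finset.sum_le_sum fun k _ => hpt k
  have hEV : ∑ k ∈ Finset.range N, dist (γ (u k)) (γ (u (k+1))) ≤ 2 := by
    have h1 := eVariationOn.sum_le (f := γ) (n := N) hmono huk
    rw [hvar] at h1
    have h2 : ∑ k ∈ Finset.range N, dist (γ (u k)) (γ (u (k+1))) =
        (∑ k ∈ Finset.range N, edist (γ (u (k+1))) (γ (u k))).toReal := by
      rw [ENNReal.toReal_sum fun a _ => edist_ne_top _ _]
      exact Finset.sum_congr rfl fun k _ => by rw [dist_comm, dist_edist]
    rw [h2]
    refine le_trans (ENNReal.toReal_mono (by norm_num) h1) (by norm_num)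
  rw [hw₁, hw₂, hw₃]
  linarith
end

section
/- For every closed curve γ of length 2 there exists v ∈ ℂ such that either {γ(t) + v : t ∈ [0,1]} ⊆ Δ₁ or {−γ(t) + v : t ∈ [0,1]} ⊆ Δ₁; that is, γ or its point reflection −γ can be translated into the equilateral triangle of height 1. -/
open Set MeasureTheory

/-- The equilateral triangle of height 1, with vertices −1/√3, 1/√3, i. -/
noncomputable def Δ₁ : Set ℂ :=
  convexHull ℝ {((-(1 / Real.sqrt 3) : ℝ) : ℂ), ((1 / Real.sqrt 3 : ℝ) : ℂ), Complex.I}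

/-! ### Auxiliary definitions: the three outer normal functionals of the triangle -/

noncomputable def tf1 (z : ℂ) : ℝ := -z.im
noncomputable def tf2 (z : ℂ) : ℝ := (Real.sqrt 3 / 2) * z.re + z.im / 2
noncomputable def tf3 (z : ℂ) : ℝ := -((Real.sqrt 3 / 2) * z.re) + z.im / 2

lemma tf1_add (w v : ℂ) : tf1 (w + v) = tf1 w + tf1 v := by simp [tf1]; ring
lemma tf2_add (w v : ℂ) : tf2 (w + v) = tf2 w + tf2 v := by simp [tf2]; ring
lemma tf3_add (w v : ℂ) : tf3 (w + v) = tf3 w + tf3 v := by simp [tf3]; ring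
lemma tf1_neg (w : ℂ) : tf1 (-w) = -tf1 w := by simp [tf1]
lemma tf2_neg (w : ℂ) : tf2 (-w) = -tf2 w := by simp [tf2]; ring
lemma tf3_neg (w : ℂ) : tf3 (-w) = -tf3 w := by simp [tf3]; ring
lemma tf1_sub (w v : ℂ) : tf1 (w - v) = tf1 w - tf1 v := by simp [tf1]; ring
lemma tf2_sub (w v : ℂ) : tf2 (w - v) = tf2 w - tf2 v := by simp [tf2]; ring
lemma tf3_sub (w v : ℂ) : tf3 (w - v) = tf3 w - tf3 v := by simp [tf3]; ring

lemma tf1_cont : Continuous tf1 := Complex.continuous_im.neg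
lemma tf2_cont : Continuous tf2 := by
  exact ((continuous_const.mul Complex.continuous_re).add
    (Complex.continuous_im.div_const 2))
lemma tf3_cont : Continuous tf3 := by
  exact (((continuous_const.mul Complex.continuous_re).neg).add
    (Complex.continuous_im.div_const 2))

/-! ### Membership in the triangle via the three linear inequalities -/

lemma combo_mem_triangle {x y z : ℂ} {a b c : ℝ} (ha : 0 ≤ a) (hb : 0 ≤ b) (hc : 0 ≤ c)
    (habc : a + b + c = 1) : a • x + b • y + c • z ∈ convexHull ℝ {x, y, z} := by
  have := Finset.centerMass_mem_convexHull (Finset.univ : Finset (Fin 3))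
    (w := ![a, b, c]) (z := ![x, y, z]) ?_ ?_ ?_ (s := {x, y, z})
  · rw [Finset.centerMass, Fin.sum_univ_three, Fin.sum_univ_three] at this
    simpa [habc] using this
  · intro i _; fin_cases i <;> simpa
  · rw [Fin.sum_univ_three]; simp; linarith
  · intro i _; fin_cases i <;> simp

lemma mem_triangle {z : ℂ} (h1 : tf1 z ≤ 0) (h2 : tf2 z ≤ 1/2) (h3 : tf3 z ≤ 1/2) :
    z ∈ Δ₁ := by
  have hs : Real.sqrt 3 ^ 2 = 3 := Real.sq_sqrt (by norm_num)
  have hs0 : (0:ℝ) < Real.sqrt 3 := Real.sqrt_pos.2 (by norm_num)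
  have ha : 0 ≤ (1 - z.im - Real.sqrt 3 * z.re) / 2 := by
    simp only [tf2] at h2; nlinarith
  have hb : 0 ≤ (1 - z.im + Real.sqrt 3 * z.re) / 2 := by
    simp only [tf3] at h3; nlinarith
  have hc : 0 ≤ z.im := by simp only [tf1] at h1; linarith
  have habc : (1 - z.im - Real.sqrt 3 * z.re) / 2 + (1 - z.im + Real.sqrt 3 * z.re) / 2
      + z.im = 1 := by ring
  have hz : z = ((1 - z.im - Real.sqrt 3 * z.re) / 2) • ((-(1 / Real.sqrt 3) : ℝ) : ℂ)
      + ((1 - z.im + Real.sqrt 3 * z.re) / 2) • ((1 / Real.sqrt 3 : ℝ) : ℂ)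
      + z.im • Complex.I := by
    apply Complex.ext <;>
      simp [Complex.add_re, Complex.add_im, Complex.real_smul, Complex.ofReal_mul]
    · field_simp
      nlinarith [hs]
  rw [Δ₁, hz]
  exact combo_mem_triangle ha hb hc habc

/-! ### The fitting lemma: choosing the translation -/

lemma fit_lemma (δ : ℝ → ℂ) (h1 h2 h3 : ℝ)
    (hb1 : ∀ t ∈ Icc (0:ℝ) 1, tf1 (δ t) ≤ h1)
    (hb2 : ∀ t ∈ Icc (0:ℝ) 1, tf2 (δ t) ≤ h2)
    (hb3 : ∀ t ∈ Icc (0:ℝ) 1, tf3 (δ t) ≤ h3)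
    (hsum : h1 + h2 + h3 ≤ 1) :
    ∃ v : ℂ, (fun t => δ t + v) '' Icc 0 1 ⊆ Δ₁ := by
  have hs : Real.sqrt 3 ^ 2 = 3 := Real.sq_sqrt (by norm_num)
  have hs0 : (0:ℝ) < Real.sqrt 3 := Real.sqrt_pos.2 (by norm_num)
  refine ⟨⟨(h3 - h2) / Real.sqrt 3, 1 - h2 - h3⟩, ?_⟩
  rintro _ ⟨t, ht, rfl⟩
  have e1 : tf1 (⟨(h3 - h2) / Real.sqrt 3, 1 - h2 - h3⟩ : ℂ) = h2 + h3 - 1 := by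
    simp [tf1]; ring
  have e2 : tf2 (⟨(h3 - h2) / Real.sqrt 3, 1 - h2 - h3⟩ : ℂ) = 1/2 - h2 := by
    simp only [tf2]; field_simp; nlinarith [hs]
  have e3 : tf3 (⟨(h3 - h2) / Real.sqrt 3, 1 - h2 - h3⟩ : ℂ) = 1/2 - h3 := by
    simp only [tf3]; field_simp; nlinarith [hs]
  refine mem_triangle ?_ ?_ ?_
  · rw [tf1_add, e1]; have := hb1 t ht; linarith
  · rw [tf2_add, e2]; have := hb2 t ht; linarith
  · rw [tf3_add, e3]; have := hb3 t ht; linarith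

/-! ### Variation lemmas -/

lemma telescope_abs (a : ℕ → ℝ) (p : ℕ) : ∀ q, p ≤ q →
    |a q - a p| ≤ ∑ j ∈ Finset.Ico p q, |a (j+1) - a j| := by
  intro q hq
  induction q, hq using Nat.le_induction with
  | base => simp
  | succ n hn ih =>
    rw [Finset.sum_Ico_succ_top hn]
    have h := abs_sub_le (a (n+1)) (a n) (a p)
    have h2 : |a (n+1) - a n| + |a n - a p|
        ≤ |a (n+1) - a n| + ∑ j ∈ Finset.Ico p n, |a (j+1) - a j| := by gcongr
    linarith

lemma cyclic_var (a : ℕ → ℝ) (N p q : ℕ) (hp : p ≤ N) (hq : q ≤ N) (h0 : a 0 = a N) :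
    2 * |a p - a q| ≤ ∑ j ∈ Finset.range N, |a (j+1) - a j| := by
  wlog hpq : p ≤ q generalizing p q
  · rw [abs_sub_comm]; exact this q p hq hp (le_of_not_ge hpq)
  have e1 : ∑ j ∈ Finset.range N, |a (j+1) - a j|
      = ∑ j ∈ Finset.Ico 0 p, |a (j+1) - a j| + ∑ j ∈ Finset.Ico p q, |a (j+1) - a j|
        + ∑ j ∈ Finset.Ico q N, |a (j+1) - a j| := by
    rw [Finset.range_eq_Ico, ← Finset.sum_Ico_consecutive _ (Nat.zero_le q) hq,
      ← Finset.sum_Ico_consecutive _ (Nat.zero_le p) hpq]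
  have t1 := telescope_abs a 0 p (Nat.zero_le p)
  have t2 := telescope_abs a p q hpq
  have t3 := telescope_abs a q N hq
  have htri : |a p - a q| ≤ |a p - a 0| + |a N - a q| := by
    rw [h0]; exact (abs_sub_le _ _ _).trans (by rw [abs_sub_comm (a N) (a q)])
  rw [e1]
  have r2 : |a p - a q| ≤ ∑ j ∈ Finset.Ico p q, |a (j+1) - a j| := by
    rw [abs_sub_comm]; exact t2
  linarith

set_option maxHeartbeats 1000000 in
lemma l1_aux (s x Y r : ℝ) (hs : s^2 = 3) (hs0 : 0 < s) (hr0 : 0 ≤ r)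
    (hr : r^2 = x^2 + Y^2) :
    |(-Y)| + |s/2*x + Y/2| + |(-(s/2*x)) + Y/2| ≤ 2*r := by
  rcases abs_cases (-Y) with ⟨e1, c1⟩ | ⟨e1, c1⟩ <;>
  rcases abs_cases (s/2*x + Y/2) with ⟨e2, c2⟩ | ⟨e2, c2⟩ <;>
  rcases abs_cases (-(s/2*x) + Y/2) with ⟨e3, c3⟩ | ⟨e3, c3⟩ <;>
  rw [e1, e2, e3] <;>
  first
    | linarith
    | nlinarith [sq_nonneg (x - s*Y), hs0]
    | nlinarith [sq_nonneg (x + s*Y), hs0]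
    | nlinarith [sq_nonneg (r - Y)]
    | nlinarith [sq_nonneg (r + Y)]

lemma l1_bound (w z : ℂ) :
    |tf1 w - tf1 z| + |tf2 w - tf2 z| + |tf3 w - tf3 z| ≤ 2 * dist w z := by
  have h1 : tf1 w - tf1 z = tf1 (w - z) := (tf1_sub w z).symm
  have h2 : tf2 w - tf2 z = tf2 (w - z) := (tf2_sub w z).symm
  have h3 : tf3 w - tf3 z = tf3 (w - z) := (tf3_sub w z).symm
  rw [h1, h2, h3, Complex.dist_eq]
  have := l1_aux (Real.sqrt 3) (w - z).re (w - z).im ‖w - z‖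
    (Real.sq_sqrt (by norm_num)) (Real.sqrt_pos.2 (by norm_num))
    (norm_nonneg _) (by rw [Complex.sq_norm, Complex.normSq_apply]; ring)
  simpa [tf1, tf2, tf3] using this

/-- Any closed curve of length 2, or its point reflection, can be translated into Δ₁. -/
theorem closed_curve_translate_into_triangle (γ : ℝ → ℂ) (hγ : IsClosedCurve2 γ) :
    ∃ v : ℂ, ((fun t => γ t + v) '' Set.Icc 0 1 ⊆ Δ₁) ∨
      ((fun t => -γ t + v) '' Set.Icc 0 1 ⊆ Δ₁) := by
  obtain ⟨hcont, hclosed, hvar⟩ := hγ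
  have hcomp : IsCompact (Icc (0:ℝ) 1) := isCompact_Icc
  have hne : (Icc (0:ℝ) 1).Nonempty := nonempty_Icc.2 zero_le_one
  have hc1 : ContinuousOn (fun t => tf1 (γ t)) (Icc 0 1) := tf1_cont.comp_continuousOn hcont
  have hc2 : ContinuousOn (fun t => tf2 (γ t)) (Icc 0 1) := tf2_cont.comp_continuousOn hcont
  have hc3 : ContinuousOn (fun t => tf3 (γ t)) (Icc 0 1) := tf3_cont.comp_continuousOn hcont
  obtain ⟨M1, hM1s, hM1⟩ := hcomp.exists_isMaxOn hne hc1
  obtain ⟨M2, hM2s, hM2⟩ := hcomp.exists_isMaxOn hne hc2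
  obtain ⟨M3, hM3s, hM3⟩ := hcomp.exists_isMaxOn hne hc3
  obtain ⟨m1, hm1s, hm1⟩ := hcomp.exists_isMinOn hne hc1
  obtain ⟨m2, hm2s, hm2⟩ := hcomp.exists_isMinOn hne hc2
  obtain ⟨m3, hm3s, hm3⟩ := hcomp.exists_isMinOn hne hc3
  -- the partition
  set S : Finset ℝ := {0, 1, M1, m1, M2, m2, M3, m3} with hS
  have hSsub : ∀ x ∈ S, x ∈ Icc (0:ℝ) 1 := by
    intro x hx
    simp only [hS, Finset.mem_insert, Finset.mem_singleton] at hx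
    rcases hx with rfl|rfl|rfl|rfl|rfl|rfl|rfl|rfl <;>
      first
        | exact left_mem_Icc.2 zero_le_one
        | exact right_mem_Icc.2 zero_le_one
        | assumption
  set u : ℕ → ℝ := fun j => if h : j < S.card then ((S.orderIsoOfFin rfl) ⟨j, h⟩ : ℝ) else 1
    with hu
  have humem : ∀ j, u j ∈ Icc (0:ℝ) 1 := by
    intro j
    by_cases h : j < S.card
    · simp only [hu, dif_pos h]
      exact hSsub _ ((S.orderIsoOfFin rfl) ⟨j, h⟩).2
    · simp only [hu, dif_neg h]
      exact right_mem_Icc.2 zero_le_one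
  have humono : Monotone u := by
    intro j k hjk
    by_cases hk : k < S.card
    · have hj : j < S.card := lt_of_le_of_lt hjk hk
      simp only [hu, dif_pos hj, dif_pos hk]
      exact Subtype.coe_le_coe.2 ((S.orderIsoOfFin rfl).monotone (by exact hjk))
    · have : u k = 1 := by simp only [hu, dif_neg hk]
      rw [this]
      exact (humem j).2
  have idx : ∀ x, x ∈ S → ∃ p, p ≤ S.card ∧ u p = x := by
    intro x hx
    refine ⟨((S.orderIsoOfFin rfl).symm ⟨x, hx⟩).val, le_of_lt (Fin.is_lt _), ?_⟩
    simp only [hu, dif_pos (Fin.is_lt _)]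
    have : (⟨((S.orderIsoOfFin rfl).symm ⟨x, hx⟩).val, Fin.is_lt _⟩ : Fin S.card)
        = (S.orderIsoOfFin rfl).symm ⟨x, hx⟩ := by
      apply Fin.ext; rfl
    rw [this, OrderIso.apply_symm_apply]
  have hu0 : u 0 = 0 := by
    have h0S : (0:ℝ) ∈ S := by simp [hS]
    obtain ⟨p, hp, hup⟩ := idx 0 h0S
    have hle : u 0 ≤ u p := humono (Nat.zero_le p)
    rw [hup] at hle
    exact le_antisymm hle (humem 0).1
  have hun : u S.card = 1 := by simp only [hu, dif_neg (lt_irrefl S.card)]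
  -- distance sum bounded by total variation
  have hdistsum : ∑ j ∈ Finset.range S.card, dist (γ (u (j+1))) (γ (u j)) ≤ 2 := by
    have h := eVariationOn.sum_le (f := γ) (s := Icc (0:ℝ) 1) (n := S.card) humono humem
    rw [hvar] at h
    have hfin : ∀ j ∈ Finset.range S.card, edist (γ (u (j+1))) (γ (u j)) ≠ ⊤ :=
      fun j _ => edist_ne_top _ _
    have h2 := ENNReal.toReal_mono (by norm_num) h
    rw [ENNReal.toReal_sum hfin] at h2
    have : ∀ j ∈ Finset.range S.card,
        (edist (γ (u (j+1))) (γ (u j))).toReal = dist (γ (u (j+1))) (γ (u j)) := by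
      intro j _; rw [dist_edist]
    rw [Finset.sum_congr rfl this] at h2
    simpa using h2
  -- per-functional cyclic bound
  have perfun : ∀ (f : ℂ → ℝ), ∀ Mi mi, Mi ∈ S → mi ∈ S →
      2 * (f (γ Mi) - f (γ mi)) ≤ ∑ j ∈ Finset.range S.card, |f (γ (u (j+1))) - f (γ (u j))| := by
    intro f Mi mi hMi hmi
    obtain ⟨p, hp, hup⟩ := idx Mi hMi
    obtain ⟨q, hq, huq⟩ := idx mi hmi
    have h0N : (fun j => f (γ (u j))) 0 = (fun j => f (γ (u j))) S.card := by
      simp only [hu0, hun, hclosed]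
    have := cyclic_var (fun j => f (γ (u j))) S.card p q hp hq h0N
    have habs : f (γ Mi) - f (γ mi) ≤ |f (γ (u p)) - f (γ (u q))| := by
      rw [hup, huq]; exact le_abs_self _
    linarith
  have hMem : ∀ x, x ∈ ({0, 1, M1, m1, M2, m2, M3, m3} : Finset ℝ) → x ∈ S := by
    intro x hx; rw [hS]; exact hx
  have key1 := perfun tf1 M1 m1 (by simp [hS]) (by simp [hS])
  have key2 := perfun tf2 M2 m2 (by simp [hS]) (by simp [hS])
  have key3 := perfun tf3 M3 m3 (by simp [hS]) (by simp [hS])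
  -- sum the three and use the pointwise ℓ¹ bound
  have hsum3 : ∑ j ∈ Finset.range S.card, (|tf1 (γ (u (j+1))) - tf1 (γ (u j))|
      + |tf2 (γ (u (j+1))) - tf2 (γ (u j))| + |tf3 (γ (u (j+1))) - tf3 (γ (u j))|)
      ≤ ∑ j ∈ Finset.range S.card, 2 * dist (γ (u (j+1))) (γ (u j)) :=
    Finset.sum_le_sum fun j _ => l1_bound _ _
  rw [← Finset.mul_sum] at hsum3
  have hsplit : ∑ j ∈ Finset.range S.card, (|tf1 (γ (u (j+1))) - tf1 (γ (u j))|
      + |tf2 (γ (u (j+1))) - tf2 (γ (u j))| + |tf3 (γ (u (j+1))) - tf3 (γ (u j))|)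
      = ∑ j ∈ Finset.range S.card, |tf1 (γ (u (j+1))) - tf1 (γ (u j))|
      + ∑ j ∈ Finset.range S.card, |tf2 (γ (u (j+1))) - tf2 (γ (u j))|
      + ∑ j ∈ Finset.range S.card, |tf3 (γ (u (j+1))) - tf3 (γ (u j))| := by
    rw [Finset.sum_add_distrib, Finset.sum_add_distrib]
  have key : (tf1 (γ M1) - tf1 (γ m1)) + (tf2 (γ M2) - tf2 (γ m2))
      + (tf3 (γ M3) - tf3 (γ m3)) ≤ 2 := by
    rw [hsplit] at hsum3
    linarith
  by_cases hA : tf1 (γ M1) + tf2 (γ M2) + tf3 (γ M3) ≤ 1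
  · obtain ⟨v, hv⟩ := fit_lemma γ (tf1 (γ M1)) (tf2 (γ M2)) (tf3 (γ M3))
      (fun t ht => hM1 ht) (fun t ht => hM2 ht) (fun t ht => hM3 ht) hA
    exact ⟨v, Or.inl hv⟩
  · have hB : (-tf1 (γ m1)) + (-tf2 (γ m2)) + (-tf3 (γ m3)) ≤ 1 := by
      push_neg at hA; linarith
    obtain ⟨v, hv⟩ := fit_lemma (fun t => -γ t) (-tf1 (γ m1)) (-tf2 (γ m2)) (-tf3 (γ m3))
      (fun t ht => by rw [tf1_neg]; exact neg_le_neg (hm1 ht))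
      (fun t ht => by rw [tf2_neg]; exact neg_le_neg (hm2 ht))
      (fun t ht => by rw [tf3_neg]; exact neg_le_neg (hm3 ht)) hB
    exact ⟨v, Or.inr hv⟩
end

section
/- The smallest area of a convex G₄-covering of all unit segments is 1/2: (i) the isosceles right triangle with legs of length 1, realized as the convex hull of {0, 1, i}, is a G₄-covering of all unit segments; and (ii) every convex set K ⊆ ℂ that is a G₄-covering of all unit segments has area (planar Lebesgue measure) at least 1/2. -/
open Set MeasureTheory

/-- K is a G₄-covering of all unit segments: every unit segment fits in K after a
rotation by a multiple of π/2 and a translation. -/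
def IsG4SegCover (K : Set ℂ) : Prop :=
  ∀ u : ℂ, ‖u‖ = 1 → ∃ j : Fin 4, ∃ v : ℂ,
    segment ℝ v (v + Complex.I ^ (j : ℕ) * u) ⊆ K

namespace G4Aux

open ENNReal Pointwise Filter Real

noncomputable def cross (u v : ℂ) : ℝ := u.re * v.im - u.im * v.re

noncomputable def LL (u v : ℂ) : ℂ →ₗ[ℝ] ℂ := Complex.basisOneI.constr ℝ ![u, v]

noncomputable def fL (u : ℂ) : ℂ →ₗ[ℝ] ℝ := u.re • Complex.imLm - u.im • Complex.reLm

noncomputable def Tset : Set ℂ := {z : ℂ | 0 ≤ z.re ∧ 0 ≤ z.im ∧ z.re + z.im ≤ 1}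

noncomputable def dir (θ : ℝ) : ℂ := (Real.cos θ : ℂ) + (Real.sin θ : ℂ) * Complex.I

lemma fL_apply (u z : ℂ) : fL u z = cross u z := by
  simp [fL, cross]

lemma LL_apply (u v z : ℂ) : LL u v z = z.re • u + z.im • v := by
  have h : z = z.re • (1:ℂ) + z.im • Complex.I := by simp [Complex.ext_iff]
  nth_rewrite 1 [h]
  rw [map_add, _root_.map_smul, _root_.map_smul]
  have h1 : (1:ℂ) = Complex.basisOneI 0 := by simp
  have h2 : Complex.I = Complex.basisOneI 1 := by simp
  rw [h1, h2, LL, Module.Basis.constr_basis, Module.Basis.constr_basis]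
  simp

lemma LL_det (u v : ℂ) : LinearMap.det (LL u v) = cross u v := by
  rw [← LinearMap.det_toMatrix Complex.basisOneI, Matrix.det_fin_two]
  simp [LinearMap.toMatrix_apply, LL, cross]
  ring

lemma vol_const_sub (s : Set ℂ) (c : ℂ) : volume ((fun z => c - z) ⁻¹' s) = volume s := by
  have h1 : (fun z : ℂ => c - z) ⁻¹' s = Neg.neg ⁻¹' ((fun z => c + z) ⁻¹' s) := by
    ext z; simp [sub_eq_add_neg]
  rw [h1, Measure.measure_preimage_neg, measure_preimage_add]

lemma sq_vol : volume {z : ℂ | z.re ∈ Icc (0:ℝ) 1 ∧ z.im ∈ Icc (0:ℝ) 1} = 1 := by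
  have h := Complex.volume_preserving_equiv_real_prod.measure_preimage
    (s := Icc (0:ℝ) 1 ×ˢ Icc (0:ℝ) 1) (measurableSet_Icc.prod measurableSet_Icc).nullMeasurableSet
  have he : Complex.measurableEquivRealProd ⁻¹' (Icc (0:ℝ) 1 ×ˢ Icc (0:ℝ) 1)
      = {z : ℂ | z.re ∈ Icc (0:ℝ) 1 ∧ z.im ∈ Icc (0:ℝ) 1} := by
    ext z; simp [Complex.measurableEquivRealProd_apply, Set.mem_prod, Prod.le_def]; tauto
  rw [he] at h
  rw [h, Measure.volume_eq_prod, Measure.prod_prod]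
  simp

lemma vol_Tset : ENNReal.ofReal (1/2) ≤ volume Tset := by
  have sq : {z : ℂ | z.re ∈ Icc (0:ℝ) 1 ∧ z.im ∈ Icc (0:ℝ) 1}
      ⊆ Tset ∪ ((fun z => (1 + Complex.I) - z) ⁻¹' Tset) := by
    intro z hz
    obtain ⟨⟨h1, h2⟩, h3, h4⟩ := hz
    rcases le_total (z.re + z.im) 1 with h | h
    · exact Or.inl ⟨h1, h3, h⟩
    · refine Or.inr ?_
      simp only [mem_preimage, Tset, mem_setOf_eq, Complex.sub_re, Complex.sub_im,
        Complex.add_re, Complex.add_im, Complex.I_re, Complex.I_im, Complex.one_re,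
        Complex.one_im]
      refine ⟨by linarith, by linarith, by linarith⟩
  have key : (1 : ℝ≥0∞) ≤ volume Tset + volume Tset := by
    calc (1:ℝ≥0∞) = volume {z : ℂ | z.re ∈ Icc (0:ℝ) 1 ∧ z.im ∈ Icc (0:ℝ) 1} := sq_vol.symm
      _ ≤ volume (Tset ∪ ((fun z => (1 + Complex.I) - z) ⁻¹' Tset)) := measure_mono sq
      _ ≤ volume Tset + volume ((fun z => (1 + Complex.I) - z) ⁻¹' Tset) := measure_union_le _ _
      _ = volume Tset + volume Tset := by rw [vol_const_sub]
  by_contra hcon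
  push_neg at hcon
  have h12 : ENNReal.ofReal (1/2) + ENNReal.ofReal (1/2) = 1 := by
    rw [← ENNReal.ofReal_add (by norm_num) (by norm_num)]; norm_num
  have := ENNReal.add_lt_add hcon hcon
  rw [h12] at this
  exact absurd key (not_le.mpr this)

lemma tri_mem (p q r : ℂ) {x y : ℝ} (hx : 0 ≤ x) (hy : 0 ≤ y) (hxy : x + y ≤ 1) :
    p + (x • (q - p) + y • (r - p)) ∈ convexHull ℝ ({p, q, r} : Set ℂ) := by
  have key : ∑ i : Fin 3, (![1 - x - y, x, y] i) • (![p, q, r] i)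
      ∈ convexHull ℝ ({p, q, r} : Set ℂ) := by
    apply (convex_convexHull ℝ _).sum_mem
    · intro i _
      fin_cases i <;> simp <;> linarith
    · rw [Fin.sum_univ_three]; simp; ring
    · intro i _
      apply subset_convexHull
      fin_cases i <;> simp
  rw [Fin.sum_univ_three] at key
  simp only [Matrix.cons_val_zero, Matrix.cons_val_one, Matrix.head_cons,
    Matrix.cons_val_two, Matrix.tail_cons] at key
  have hxe : p + (x • (q - p) + y • (r - p)) = (1 - x - y) • p + x • q + y • r := by module
  rw [hxe]; exact key

lemma vol_triangle_ge (p q r : ℂ) :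
    ENNReal.ofReal (|cross (q - p) (r - p)| / 2) ≤ volume (convexHull ℝ ({p, q, r} : Set ℂ)) := by
  set u := q - p with hu
  set v := r - p with hv
  have himg : (fun z => p + z) '' (LL u v '' Tset) ⊆ convexHull ℝ ({p, q, r} : Set ℂ) := by
    rintro _ ⟨_, ⟨z, hz, rfl⟩, rfl⟩
    rw [LL_apply]
    exact tri_mem p q r hz.1 hz.2.1 hz.2.2
  calc ENNReal.ofReal (|cross u v| / 2)
      = ENNReal.ofReal |cross u v| * ENNReal.ofReal (1/2) := by
        rw [← ENNReal.ofReal_mul (abs_nonneg _)]; ring_nf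
    _ ≤ ENNReal.ofReal |cross u v| * volume Tset := mul_le_mul_right vol_Tset _
    _ = ENNReal.ofReal |LinearMap.det (LL u v)| * volume Tset := by rw [LL_det]
    _ = volume (LL u v '' Tset) := (Measure.addHaar_image_linearMap volume _ _).symm
    _ = volume ((fun z => p + z) '' (LL u v '' Tset)) := by
        rw [show (fun z : ℂ => p + z) '' (LL u v '' Tset) = p +ᵥ (LL u v '' Tset) from rfl]
        exact (measure_vadd _ _ _).symm
    _ ≤ volume (convexHull ℝ ({p, q, r} : Set ℂ)) := measure_mono himg

lemma line_null (u : ℂ) (hu : u ≠ 0) (c : ℝ) : volume {z : ℂ | cross u z = c} = 0 := by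
  have hne : u.re ^ 2 + u.im ^ 2 ≠ 0 := by
    have : u.re ≠ 0 ∨ u.im ≠ 0 := by
      by_contra h; push_neg at h; exact hu (Complex.ext h.1 h.2)
    rcases this with h | h <;> positivity
  have hIu : fL u (Complex.I * u) = u.re ^ 2 + u.im ^ 2 := by
    simp [fL_apply, cross, Complex.mul_re, Complex.mul_im, Complex.I_re, Complex.I_im]; ring
  have hIu0 : fL u (Complex.I * u) ≠ 0 := by rw [hIu]; exact hne
  have hker : LinearMap.ker (fL u) ≠ ⊤ := by
    intro h
    exact hIu0 (by rw [← LinearMap.mem_ker, h]; trivial)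
  have h0 : volume ((LinearMap.ker (fL u) : Submodule ℝ ℂ) : Set ℂ) = 0 :=
    Measure.addHaar_submodule volume _ hker
  set z0 : ℂ := (c / (u.re ^ 2 + u.im ^ 2)) • (Complex.I * u) with hz0
  have hc : fL u z0 = c := by
    rw [hz0, _root_.map_smul, hIu, smul_eq_mul]
    field_simp
  have hset : {z : ℂ | cross u z = c} = z0 +ᵥ ((LinearMap.ker (fL u) : Submodule ℝ ℂ) : Set ℂ) := by
    ext z
    simp only [mem_setOf_eq, Set.mem_vadd_set, SetLike.mem_coe, LinearMap.mem_ker]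
    constructor
    · intro h
      exact ⟨z - z0, by rw [map_sub, hc, fL_apply, h, sub_self], by simp⟩
    · rintro ⟨w, hw, rfl⟩
      rw [← fL_apply, vadd_eq_add, map_add, hw, hc, add_zero]
  rw [hset, measure_vadd, h0]

lemma abs_sub_cases {t1 t2 : ℝ} (hsign : 0 ≤ t1 * t2) :
    |t2 - t1| ≤ |t1| ∨ |t2 - t1| ≤ |t2| := by
  rcases le_total 0 t1 with ht | ht <;> rcases le_total 0 t2 with ht' | ht'
  · rcases le_total t1 t2 with htt | htt
    · right; rw [abs_of_nonneg (by linarith), abs_of_nonneg ht']; linarith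
    · left; rw [abs_of_nonpos (by linarith), abs_of_nonneg ht]; linarith
  · have h0 : t1 * t2 = 0 := le_antisymm (mul_nonpos_of_nonneg_of_nonpos ht ht') hsign
    rcases mul_eq_zero.mp h0 with h | h
    · right; rw [h, sub_zero]
    · left; rw [h, zero_sub, abs_neg]
  · have h0 : t1 * t2 = 0 := le_antisymm (mul_nonpos_of_nonpos_of_nonneg ht ht') hsign
    rcases mul_eq_zero.mp h0 with h | h
    · right; rw [h, sub_zero]
    · left; rw [h, zero_sub, abs_neg]
  · rcases le_total t1 t2 with htt | htt
    · left; rw [abs_of_nonneg (by linarith), abs_of_nonpos ht]; linarith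
    · right; rw [abs_of_nonpos (by linarith), abs_of_nonpos ht']; linarith

lemma two_seg (K : Set ℂ) (hK : Convex ℝ K) (a b u v : ℂ) (hu : ‖u‖ = 1)
    (h1 : segment ℝ a (a + u) ⊆ K) (h2 : segment ℝ b (b + v) ⊆ K) :
    ENNReal.ofReal (|cross u v| / 2) ≤ volume K := by
  have hu0 : u ≠ 0 := by intro h; rw [h] at hu; simp at hu
  set t1 := cross u (b - a) with ht1
  set t2 := cross u (b + v - a) with ht2
  have hdiff : t2 - t1 = cross u v := by
    simp only [ht1, ht2, cross]
    simp [Complex.add_re, Complex.add_im, Complex.sub_re, Complex.sub_im]; ring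
  have haK : a ∈ K := h1 (left_mem_segment ℝ _ _)
  have hauK : a + u ∈ K := h1 (right_mem_segment ℝ _ _)
  have hbK : b ∈ K := h2 (left_mem_segment ℝ _ _)
  have hbvK : b + v ∈ K := h2 (right_mem_segment ℝ _ _)
  have hT1 : convexHull ℝ ({a, a + u, b} : Set ℂ) ⊆ K := by
    apply convexHull_min _ hK
    intro z hz
    rcases hz with h | h | h <;> subst h <;> assumption
  have hT2 : convexHull ℝ ({a, a + u, b + v} : Set ℂ) ⊆ K := by
    apply convexHull_min _ hK
    intro z hz
    rcases hz with h | h | h <;> subst h <;> assumption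
  have hv1 : ENNReal.ofReal (|t1| / 2) ≤ volume (convexHull ℝ ({a, a + u, b} : Set ℂ)) := by
    have h := vol_triangle_ge a (a + u) b
    rw [add_sub_cancel_left] at h
    rw [ht1]; exact h
  have hv2 : ENNReal.ofReal (|t2| / 2) ≤ volume (convexHull ℝ ({a, a + u, b + v} : Set ℂ)) := by
    have h := vol_triangle_ge a (a + u) (b + v)
    rw [add_sub_cancel_left] at h
    rw [ht2]; exact h
  rcases le_or_gt 0 (t1 * t2) with hsign | hsign
  · rcases abs_sub_cases hsign with hcase | hcase
    · calc ENNReal.ofReal (|cross u v| / 2) ≤ ENNReal.ofReal (|t1| / 2) := by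
            apply ENNReal.ofReal_le_ofReal; rw [← hdiff]; linarith
        _ ≤ volume (convexHull ℝ ({a, a + u, b} : Set ℂ)) := hv1
        _ ≤ volume K := measure_mono hT1
    · calc ENNReal.ofReal (|cross u v| / 2) ≤ ENNReal.ofReal (|t2| / 2) := by
            apply ENNReal.ofReal_le_ofReal; rw [← hdiff]; linarith
        _ ≤ volume (convexHull ℝ ({a, a + u, b + v} : Set ℂ)) := hv2
        _ ≤ volume K := measure_mono hT2
  · have hzero : fL u u = 0 := by rw [fL_apply]; simp [cross]; ring
    have hside_le : ∀ w : ℂ, cross u (w - a) ≤ 0 →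
        convexHull ℝ ({a, a + u, w} : Set ℂ) ⊆ {z | fL u z ≤ fL u a} := by
      intro w hw
      apply convexHull_min _
        (convex_halfSpace_le ⟨fun x y => map_add _ x y, fun c x => map_smul _ c x⟩ (fL u a))
      intro z hz
      rcases hz with rfl | rfl | rfl
      · simp only [mem_setOf_eq, le_refl]
      · simp only [mem_setOf_eq, map_add, hzero, add_zero, le_refl]
      · have h3 : fL u z - fL u a = cross u (z - a) := by
          rw [← map_sub, fL_apply]
        simp only [mem_setOf_eq]; linarith
    have hside_ge : ∀ w : ℂ, 0 ≤ cross u (w - a) →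
        convexHull ℝ ({a, a + u, w} : Set ℂ) ⊆ {z | fL u a ≤ fL u z} := by
      intro w hw
      apply convexHull_min _
        (convex_halfSpace_ge ⟨fun x y => map_add _ x y, fun c x => map_smul _ c x⟩ (fL u a))
      intro z hz
      rcases hz with rfl | rfl | rfl
      · simp only [mem_setOf_eq, le_refl]
      · simp only [mem_setOf_eq, map_add, hzero, add_zero, le_refl]
      · have h3 : fL u z - fL u a = cross u (z - a) := by
          rw [← map_sub, fL_apply]
        simp only [mem_setOf_eq]; linarith
    have hinter : volume (convexHull ℝ ({a, a + u, b} : Set ℂ) ∩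
        convexHull ℝ ({a, a + u, b + v} : Set ℂ)) = 0 := by
      have hsub : convexHull ℝ ({a, a + u, b} : Set ℂ) ∩
          convexHull ℝ ({a, a + u, b + v} : Set ℂ) ⊆ {z : ℂ | cross u z = cross u a} := by
        rcases mul_neg_iff.mp hsign with ⟨hp, hn⟩ | ⟨hn, hp⟩
        · intro z ⟨hz1, hz2⟩
          have g1 := hside_ge b (le_of_lt hp) hz1
          have g2 := hside_le (b + v) (le_of_lt hn) hz2
          simp only [mem_setOf_eq] at g1 g2 ⊢
          rw [← fL_apply, ← fL_apply]
          linarith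
        · intro z ⟨hz1, hz2⟩
          have g1 := hside_le b (le_of_lt hn) hz1
          have g2 := hside_ge (b + v) (le_of_lt hp) hz2
          simp only [mem_setOf_eq] at g1 g2 ⊢
          rw [← fL_apply, ← fL_apply]
          linarith
      exact measure_mono_null hsub (line_null u hu0 _)
    have hmeas : MeasurableSet (convexHull ℝ ({a, a + u, b + v} : Set ℂ)) :=
      ((Set.toFinite _).isCompact_convexHull (𝕜 := ℝ)).isClosed.measurableSet
    have hunion := measure_union_add_inter (μ := volume)
      (convexHull ℝ ({a, a + u, b} : Set ℂ)) hmeas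
    rw [hinter, add_zero] at hunion
    have habs : |cross u v| = |t1| + |t2| := by
      rw [← hdiff]
      rcases mul_neg_iff.mp hsign with ⟨hp, hn⟩ | ⟨hn, hp⟩
      · rw [abs_of_nonpos (by linarith), abs_of_nonneg (le_of_lt hp),
          abs_of_nonpos (le_of_lt hn)]; linarith
      · rw [abs_of_nonneg (by linarith), abs_of_nonpos (le_of_lt hn),
          abs_of_nonneg (le_of_lt hp)]; linarith
    calc ENNReal.ofReal (|cross u v| / 2)
        = ENNReal.ofReal (|t1| / 2) + ENNReal.ofReal (|t2| / 2) := by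
          rw [← ENNReal.ofReal_add (by positivity) (by positivity), habs]; ring_nf
      _ ≤ volume (convexHull ℝ ({a, a + u, b} : Set ℂ)) +
          volume (convexHull ℝ ({a, a + u, b + v} : Set ℂ)) := add_le_add hv1 hv2
      _ = volume (convexHull ℝ ({a, a + u, b} : Set ℂ) ∪
          convexHull ℝ ({a, a + u, b + v} : Set ℂ)) := hunion.symm
      _ ≤ volume K := measure_mono (union_subset hT1 hT2)

lemma dir_norm (θ : ℝ) : ‖dir θ‖ = 1 := by
  rw [dir, Complex.ofReal_cos, Complex.ofReal_sin]
  exact Complex.norm_cos_add_sin_mul_I θ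

lemma dir_rot (θ : ℝ) : Complex.I * dir θ = dir (θ + Real.pi/2) := by
  rw [dir, dir, Real.cos_add_pi_div_two, Real.sin_add_pi_div_two]
  apply Complex.ext <;> simp

lemma cross_dir (φ₁ φ₂ : ℝ) : cross (dir φ₁) (dir φ₂) = Real.sin (φ₂ - φ₁) := by
  rw [Real.sin_sub]
  simp [cross, dir, Complex.cos_ofReal_re, Complex.sin_ofReal_re]
  ring

lemma cover_Q {K : Set ℂ} (hc : IsG4SegCover K) (θ : ℝ) :
    (∃ w : ℂ, segment ℝ w (w + dir θ) ⊆ K) ∨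
    (∃ w : ℂ, segment ℝ w (w + dir (θ + Real.pi/2)) ⊆ K) := by
  obtain ⟨j, v, hv⟩ := hc (dir θ) (dir_norm θ)
  fin_cases j <;> norm_num [pow_succ, Complex.I_sq] at hv
  · exact Or.inl ⟨v, hv⟩
  · exact Or.inr ⟨v, by rw [← dir_rot θ]; exact hv⟩
  · refine Or.inl ⟨v - dir θ, ?_⟩
    rw [segment_symm, show v - dir θ + dir θ = v from by ring,
      show v - dir θ = v + -dir θ from by ring]
    exact hv
  · refine Or.inr ⟨v - dir (θ + Real.pi/2), ?_⟩
    rw [segment_symm, show v - dir (θ + Real.pi/2) + dir (θ + Real.pi/2) = v from by ring,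
      show v - dir (θ + Real.pi/2) = v + -(Complex.I * dir θ) from by rw [← dir_rot θ]; ring]
    exact hv

lemma flipLemma {p : ℕ → Prop} {m k k' : ℕ} (hk : k ≤ m) (hk' : k' ≤ m)
    (h1 : p k') (h2 : ¬ p k) :
    ∃ j, j + 1 ≤ m ∧ ((p j ∧ ¬ p (j+1)) ∨ (¬ p j ∧ p (j+1))) := by
  by_contra hcon
  push_neg at hcon
  have hstep : ∀ j, j + 1 ≤ m → (p j ↔ p (j+1)) := by
    intro j hj
    have := hcon j hj
    tauto
  have hall : ∀ j, j ≤ m → (p 0 ↔ p j) := by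
    intro j
    induction j with
    | zero => intro _; exact Iff.rfl
    | succ n ih =>
      intro hj
      exact (ih (le_trans (Nat.le_succ n) hj)).trans (hstep n hj)
  exact h2 ((hall k hk).mp ((hall k' hk').mpr h1))

lemma main_pair {K : Set ℂ} (hK : Convex ℝ K) (φ₁ φ₂ : ℝ)
    (hq1 : ∃ w : ℂ, segment ℝ w (w + dir φ₁) ⊆ K)
    (hq2 : ∃ w : ℂ, segment ℝ w (w + dir φ₂) ⊆ K) :
    ENNReal.ofReal (|Real.sin (φ₂ - φ₁)| / 2) ≤ volume K := by
  obtain ⟨w1, h1⟩ := hq1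
  obtain ⟨w2, h2⟩ := hq2
  have := two_seg K hK w1 w2 (dir φ₁) (dir φ₂) (dir_norm φ₁) h1 h2
  rwa [cross_dir] at this

lemma step {K : Set ℂ} (hK : Convex ℝ K) (hc : IsG4SegCover K) (n : ℕ) :
    ENNReal.ofReal (Real.cos (Real.pi / (2 * ((n : ℝ) + 1))) / 2) ≤ volume K := by
  set m : ℕ := n + 1 with hm
  set h : ℝ := Real.pi / (2 * m) with hh
  have hm0 : (m : ℝ) ≠ 0 := by positivity
  have hpi := Real.pi_pos
  have hh_pos : 0 < h := by
    rw [hh]; positivity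
  have hh_le : h ≤ Real.pi / 2 := by
    rw [hh, div_le_div_iff₀ (by positivity) (by norm_num)]
    have : (1 : ℝ) ≤ (m : ℝ) := by exact_mod_cast Nat.one_le_iff_ne_zero.mpr (by omega)
    nlinarith
  have hcos_nonneg : 0 ≤ Real.cos h := Real.cos_nonneg_of_mem_Icc ⟨by linarith, hh_le⟩
  have hcos_le_one : Real.cos h ≤ 1 := Real.cos_le_one h
  have hmh : (m : ℝ) * h = Real.pi / 2 := by
    rw [hh]; field_simp
  rw [show Real.pi / (2 * ((n : ℝ) + 1)) = h from by rw [hh, hm]; push_cast; ring]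
  set p : ℕ → Prop := fun k => ∃ w : ℂ, segment ℝ w (w + dir (k * h)) ⊆ K with hp
  have hdich : ∀ k : ℕ, p k ∨ ∃ w : ℂ, segment ℝ w (w + dir (k * h + Real.pi/2)) ⊆ K :=
    fun k => cover_Q hc (k * h)
  by_cases hall : ∀ k, k ≤ m → p k
  · have q0 := hall 0 (Nat.zero_le m)
    have qm := hall m le_rfl
    have hb := main_pair hK (((0:ℕ):ℝ) * h) (((m:ℕ):ℝ) * h) q0 qm
    rw [show ((m:ℕ):ℝ) * h - ((0:ℕ):ℝ) * h = Real.pi / 2 from by rw [hmh]; simp,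
      Real.sin_pi_div_two, abs_one] at hb
    exact le_trans (ENNReal.ofReal_le_ofReal (by linarith)) hb
  · push_neg at hall
    obtain ⟨k0, hk0, hk0n⟩ := hall
    by_cases hex : ∃ k', k' ≤ m ∧ p k'
    · obtain ⟨k', hk', hpk'⟩ := hex
      obtain ⟨j, hj, hcase⟩ := flipLemma hk0 hk' hpk' hk0n
      rcases hcase with ⟨hpj, hpj1⟩ | ⟨hpj, hpj1⟩
      · have hq2 : ∃ w : ℂ, segment ℝ w (w + dir (((j+1:ℕ):ℝ) * h + Real.pi/2)) ⊆ K :=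
          (hdich (j+1)).resolve_left hpj1
        have hb := main_pair hK (((j:ℕ):ℝ) * h) (((j+1:ℕ):ℝ) * h + Real.pi/2) hpj hq2
        rw [show ((j+1:ℕ):ℝ) * h + Real.pi/2 - ((j:ℕ):ℝ) * h = h + Real.pi/2 from by
            push_cast; ring,
          Real.sin_add_pi_div_two, abs_of_nonneg hcos_nonneg] at hb
        exact hb
      · have hq1 : ∃ w : ℂ, segment ℝ w (w + dir (((j:ℕ):ℝ) * h + Real.pi/2)) ⊆ K :=
          (hdich j).resolve_left hpj
        have hq2 : p (j+1) := hpj1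
        have hb := main_pair hK (((j:ℕ):ℝ) * h + Real.pi/2) (((j+1:ℕ):ℝ) * h) hq1 hq2
        rw [show ((j+1:ℕ):ℝ) * h - (((j:ℕ):ℝ) * h + Real.pi/2) = h - Real.pi/2 from by
            push_cast; ring,
          Real.sin_sub_pi_div_two, abs_neg, abs_of_nonneg hcos_nonneg] at hb
        exact hb
    · push_neg at hex
      have hq0 : ∃ w : ℂ, segment ℝ w (w + dir (((0:ℕ):ℝ) * h + Real.pi/2)) ⊆ K :=
        (hdich 0).resolve_left (hex 0 (Nat.zero_le m))
      have hqm : ∃ w : ℂ, segment ℝ w (w + dir (((m:ℕ):ℝ) * h + Real.pi/2)) ⊆ K :=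
        (hdich m).resolve_left (hex m le_rfl)
      have hb := main_pair hK (((0:ℕ):ℝ) * h + Real.pi/2) (((m:ℕ):ℝ) * h + Real.pi/2) hq0 hqm
      rw [show ((m:ℕ):ℝ) * h + Real.pi/2 - (((0:ℕ):ℝ) * h + Real.pi/2) = Real.pi/2 from by
        rw [hmh]; simp; ring, Real.sin_pi_div_two, abs_one] at hb
      exact le_trans (ENNReal.ofReal_le_ofReal (by linarith)) hb

lemma lower_bound {K : Set ℂ} (hK : Convex ℝ K) (hc : IsG4SegCover K) :
    ENNReal.ofReal (1 / 2) ≤ volume K := by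
  have htend : Filter.Tendsto
      (fun n : ℕ => ENNReal.ofReal (Real.cos (Real.pi / (2 * ((n : ℝ) + 1))) / 2))
      Filter.atTop (nhds (ENNReal.ofReal (1 / 2))) := by
    have h1 : Filter.Tendsto (fun n : ℕ => Real.pi / (2 * ((n : ℝ) + 1)))
        Filter.atTop (nhds 0) := by
      have h0 := tendsto_one_div_add_atTop_nhds_zero_nat (𝕜 := ℝ)
      have h2 := h0.const_mul (Real.pi / 2)
      rw [mul_zero] at h2
      convert h2 using 2 with n
      field_simp
    have h2 : Filter.Tendsto (fun n : ℕ => Real.cos (Real.pi / (2 * ((n : ℝ) + 1))) / 2)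
        Filter.atTop (nhds (1 / 2)) := by
      have := (Real.continuous_cos.tendsto 0).comp h1
      rw [Real.cos_zero] at this
      exact this.div_const 2
    exact (ENNReal.continuous_ofReal.tendsto _).comp h2
  exact le_of_tendsto' htend (fun n => step hK hc n)

lemma mem_tri_re {t : ℝ} (h0 : 0 ≤ t) (h1 : t ≤ 1) :
    (t : ℂ) ∈ convexHull ℝ ({0, 1, Complex.I} : Set ℂ) := by
  apply segment_subset_convexHull (show (0:ℂ) ∈ _ by simp) (show (1:ℂ) ∈ _ by simp)
  exact ⟨1 - t, t, by linarith, h0, by ring, by simp⟩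

lemma mem_tri_im {s : ℝ} (h0 : 0 ≤ s) (h1 : s ≤ 1) :
    (s : ℂ) * Complex.I ∈ convexHull ℝ ({0, 1, Complex.I} : Set ℂ) := by
  apply segment_subset_convexHull (show (0:ℂ) ∈ _ by simp) (show Complex.I ∈ _ by simp)
  refine ⟨1 - s, s, by linarith, h0, by ring, ?_⟩
  simp [Complex.real_smul]

lemma seg_tri {t s : ℝ} (ht0 : 0 ≤ t) (ht1 : t ≤ 1) (hs0 : 0 ≤ s) (hs1 : s ≤ 1) :
    segment ℝ (t : ℂ) ((s : ℂ) * Complex.I) ⊆ convexHull ℝ ({0, 1, Complex.I} : Set ℂ) :=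
  (convex_convexHull ℝ _).segment_subset (mem_tri_re ht0 ht1) (mem_tri_im hs0 hs1)

end G4Aux

open G4Aux in
/-- The smallest area of a convex G₄-covering of all unit segments is 1/2, attained
by the isosceles right triangle with legs of length 1. -/
theorem G4_covering_unit_segments :
    IsG4SegCover (convexHull ℝ {(0 : ℂ), 1, Complex.I}) ∧
    (∀ K : Set ℂ, Convex ℝ K → IsG4SegCover K →
      ENNReal.ofReal (1 / 2) ≤ volume K) := by
  constructor
  · intro u hu
    have habs : u.re ^ 2 + u.im ^ 2 = 1 := by
      have h1 : ‖u‖ = 1 := hu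
      have h2 : ‖u‖ ^ 2 = Complex.normSq u := Complex.sq_norm u
      rw [h1] at h2
      rw [Complex.normSq_apply] at h2
      nlinarith
    have hre1 : u.re ≤ 1 := by nlinarith [sq_nonneg (u.re - 1), sq_nonneg u.im]
    have hre2 : -1 ≤ u.re := by nlinarith [sq_nonneg (u.re + 1), sq_nonneg u.im]
    have him1 : u.im ≤ 1 := by nlinarith [sq_nonneg (u.im - 1), sq_nonneg u.re]
    have him2 : -1 ≤ u.im := by nlinarith [sq_nonneg (u.im + 1), sq_nonneg u.re]
    rcases le_total u.re 0 with ha | ha <;> rcases le_total u.im 0 with hb | hb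
    · -- re ≤ 0, im ≤ 0 : j = 3
      refine ⟨3, ((-u.im : ℝ) : ℂ), ?_⟩
      have hj : ((3 : Fin 4) : ℕ) = 3 := rfl
      have he : ((-u.im : ℝ) : ℂ) + Complex.I ^ ((3 : Fin 4) : ℕ) * u
          = ((-u.re : ℝ) : ℂ) * Complex.I := by
        rw [hj, show Complex.I ^ 3 = -Complex.I from by
          rw [pow_succ, Complex.I_sq]; ring]
        apply Complex.ext <;>
          simp [Complex.mul_re, Complex.mul_im] <;> ring
      rw [he]
      exact seg_tri (by linarith) (by linarith) (by linarith) (by linarith)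
    · -- re ≤ 0, im ≥ 0 : j = 0
      refine ⟨0, ((-u.re : ℝ) : ℂ), ?_⟩
      have hj : ((0 : Fin 4) : ℕ) = 0 := rfl
      have he : ((-u.re : ℝ) : ℂ) + Complex.I ^ ((0 : Fin 4) : ℕ) * u
          = ((u.im : ℝ) : ℂ) * Complex.I := by
        rw [hj, pow_zero, one_mul]
        apply Complex.ext <;>
          simp [Complex.mul_re, Complex.mul_im] <;> ring
      rw [he]
      exact seg_tri (by linarith) (by linarith) (by linarith) (by linarith)
    · -- re ≥ 0, im ≤ 0 : j = 2
      refine ⟨2, ((u.re : ℝ) : ℂ), ?_⟩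
      have hj : ((2 : Fin 4) : ℕ) = 2 := rfl
      have he : ((u.re : ℝ) : ℂ) + Complex.I ^ ((2 : Fin 4) : ℕ) * u
          = ((-u.im : ℝ) : ℂ) * Complex.I := by
        rw [hj, show Complex.I ^ 2 = -1 from Complex.I_sq]
        apply Complex.ext <;>
          simp [Complex.mul_re, Complex.mul_im] <;> ring
      rw [he]
      exact seg_tri (by linarith) (by linarith) (by linarith) (by linarith)
    · -- re ≥ 0, im ≥ 0 : j = 1
      refine ⟨1, ((u.im : ℝ) : ℂ), ?_⟩
      have hj : ((1 : Fin 4) : ℕ) = 1 := rfl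
      have he : ((u.im : ℝ) : ℂ) + Complex.I ^ ((1 : Fin 4) : ℕ) * u
          = ((u.re : ℝ) : ℂ) * Complex.I := by
        rw [hj, pow_one]
        apply Complex.ext <;>
          simp [Complex.mul_re, Complex.mul_im] <;> ring
      rw [he]
      exact seg_tri (by linarith) (by linarith) (by linarith) (by linarith)
  · intro K hK hc
    exact lower_bound hK hc
end

section
/- Let v₀, v₁, …, v₁₂ ∈ ℂ with v₁₂ = v₀ and v_{k+1} − v_k = r_k·e^{iπk/6} for some r_k ≥ 0, for each k = 0,…,11 (so the v_k are the vertices of a possibly degenerate convex 12-gon whose k-th edge has slope kπ/6 modulo π). Let p_k be a point on the segment [v_k, v_{k+1}] for each k = 0,…,11, and set p₁₂ = p₀. Then the length of the closed circuit through the p_k satisfies ∑_{k=0}^{11} |p_{k+1} − p_k| ≥ cos(π/12) · ∑_{k=0}^{11} r_k, i.e., the circuit is at least cos(π/12) times the perimeter of the 12-gon. -/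
open Set

lemma key12 (a b φ : ℝ) (ha : 0 ≤ a) (hb : 0 ≤ b) :
    Real.cos (Real.pi/12) * (a + b) ≤
      ‖(a : ℂ) * Complex.exp ((φ : ℂ) * Complex.I)
        + (b : ℂ) * Complex.exp (((φ + Real.pi/6 : ℝ) : ℂ) * Complex.I)‖ := by
  have h1 : (a : ℂ) * Complex.exp ((φ : ℂ) * Complex.I)
        + (b : ℂ) * Complex.exp (((φ + Real.pi/6 : ℝ) : ℂ) * Complex.I)
      = Complex.exp ((φ : ℂ) * Complex.I) *
        ((a : ℂ) + (b : ℂ) * Complex.exp (((Real.pi/6 : ℝ) : ℂ) * Complex.I)) := by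
    have h2 : ((φ + Real.pi/6 : ℝ) : ℂ) * Complex.I
        = (φ : ℂ) * Complex.I + ((Real.pi/6 : ℝ) : ℂ) * Complex.I := by push_cast; ring
    rw [h2, Complex.exp_add]; ring
  rw [h1, norm_mul,
      Complex.norm_exp_ofReal_mul_I, one_mul]
  have hre : ((a : ℂ) + (b : ℂ) * Complex.exp (((Real.pi/6 : ℝ) : ℂ) * Complex.I)).re
      = a + b * Real.cos (Real.pi/6) := by
    simp only [Complex.add_re, Complex.mul_re, Complex.ofReal_re, Complex.ofReal_im,
      Complex.exp_ofReal_mul_I_re, Complex.exp_ofReal_mul_I_im]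
    ring
  have him : ((a : ℂ) + (b : ℂ) * Complex.exp (((Real.pi/6 : ℝ) : ℂ) * Complex.I)).im
      = b * Real.sin (Real.pi/6) := by
    simp only [Complex.add_im, Complex.mul_im, Complex.ofReal_re, Complex.ofReal_im,
      Complex.exp_ofReal_mul_I_re, Complex.exp_ofReal_mul_I_im]
    ring
  rw [Complex.norm_def, Complex.normSq_apply, hre, him]
  have hc0 : 0 ≤ Real.cos (Real.pi/12) := by
    apply Real.cos_nonneg_of_mem_Icc
    constructor <;> nlinarith [Real.pi_pos]
  have hdbl : Real.cos (Real.pi/6) = 2 * Real.cos (Real.pi/12) ^ 2 - 1 := by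
    have := Real.cos_sq (Real.pi/12)
    rw [show 2 * (Real.pi/12) = Real.pi/6 by ring] at this
    linarith
  have hs : Real.sin (Real.pi/6) ^ 2 = 1 - Real.cos (Real.pi/6) ^ 2 := by
    nlinarith [Real.sin_sq_add_cos_sq (Real.pi/6)]
  have hc1 : Real.cos (Real.pi/12) ≤ 1 := Real.cos_le_one _
  rw [show Real.cos (Real.pi/12) * (a+b) = Real.sqrt ((Real.cos (Real.pi/12) * (a+b))^2)
    from (Real.sqrt_sq (by positivity)).symm]
  apply Real.sqrt_le_sqrt
  have hc2 : Real.cos (Real.pi/12) ^ 2 ≤ 1 := by nlinarith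
  have hkey : 0 ≤ (1 - Real.cos (Real.pi/12) ^ 2) * (a - b) ^ 2 :=
    mul_nonneg (by linarith) (sq_nonneg _)
  have hb2 : b ^ 2 * Real.sin (Real.pi/6) ^ 2
      = b ^ 2 * (1 - (2 * Real.cos (Real.pi/12) ^ 2 - 1) ^ 2) := by rw [hs, hdbl]
  rw [hdbl]
  nlinarith [hkey, hb2]


/-- A circuit through points on the edges of a (possibly degenerate) convex 12-gon
whose k-th edge has direction e^{iπk/6} is at least cos(π/12) times the perimeter. -/
theorem circuit_in_12gon_length (v p : ℕ → ℂ) (r : ℕ → ℝ)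
    (hv : v 12 = v 0) (hp : p 12 = p 0)
    (hr : ∀ k < 12, 0 ≤ r k)
    (hedge : ∀ k < 12, v (k + 1) - v k =
      (r k : ℂ) * Complex.exp (((Real.pi * (k : ℝ) / 6 : ℝ) : ℂ) * Complex.I))
    (hpk : ∀ k < 12, p k ∈ segment ℝ (v k) (v (k + 1))) :
    Real.cos (Real.pi / 12) * ∑ k ∈ Finset.range 12, r k ≤
      ∑ k ∈ Finset.range 12, ‖p (k + 1) - p k‖ := by
  -- extract the parameters t k
  have hex : ∀ k : ℕ, ∃ s : ℝ, k < 12 →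
      0 ≤ s ∧ s ≤ 1 ∧ p k - v k = (s : ℂ) * (v (k + 1) - v k) := by
    intro k
    by_cases hk : k < 12
    · obtain ⟨x, y, hx, hy, hxy, hz⟩ := hpk k hk
      refine ⟨y, fun _ => ⟨hy, by linarith, ?_⟩⟩
      have hxc : (x : ℂ) + (y : ℂ) = 1 := by exact_mod_cast hxy
      rw [← hz]
      simp only [Complex.real_smul]
      linear_combination (v k) * hxc
    · exact ⟨0, fun h => absurd h hk⟩
  choose t ht using hex
  -- per-edge formula for p k
  have hpf : ∀ k, k < 12 → p k = v k + ((t k : ℂ)) * (v (k + 1) - v k) := by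
    intro k hk
    have := (ht k hk).2.2
    linear_combination this
  -- difference formula for k with k+1 < 12
  have hd : ∀ k, k + 1 < 12 →
      Real.cos (Real.pi / 12) * ((1 - t k) * r k + t (k + 1) * r (k + 1))
        ≤ ‖p (k + 1) - p k‖ := by
    intro k hk
    have hk' : k < 12 := by omega
    have h1 := hpf k hk'
    have h2 := hpf (k + 1) hk
    have e1 := hedge k hk'
    have e2 := hedge (k + 1) hk
    have hz : p (k + 1) - p k
        = (((1 - t k) * r k : ℝ) : ℂ) *
            Complex.exp (((Real.pi * (k : ℝ) / 6 : ℝ) : ℂ) * Complex.I)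
          + ((t (k + 1) * r (k + 1) : ℝ) : ℂ) *
            Complex.exp (((Real.pi * (k : ℝ) / 6 + Real.pi / 6 : ℝ) : ℂ) * Complex.I) := by
      have harg : ((Real.pi * (k : ℝ) / 6 + Real.pi / 6 : ℝ) : ℂ)
          = ((Real.pi * ((k : ℕ) + 1 : ℕ) / 6 : ℝ) : ℂ) := by push_cast; ring
      rw [harg]
      push_cast at h1 h2 e1 e2 ⊢
      linear_combination h2 - h1 + (1 - (t k : ℂ)) * e1 + ((t (k + 1) : ℂ)) * e2
    rw [hz]
    exact key12 _ _ _ (mul_nonneg (by linarith [(ht k hk').2.1]) (hr k hk'))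
      (mul_nonneg (ht (k + 1) hk).1 (hr (k + 1) hk))
  -- last edge, k = 11
  have hd11 : Real.cos (Real.pi / 12) * ((1 - t 11) * r 11 + t 0 * r 0)
      ≤ ‖p 12 - p 11‖ := by
    have h1 := hpf 11 (by norm_num)
    have h0 := hpf 0 (by norm_num)
    have e1 := hedge 11 (by norm_num)
    have e0 := hedge 0 (by norm_num)
    have hz : p 12 - p 11
        = (((1 - t 11) * r 11 : ℝ) : ℂ) *
            Complex.exp (((Real.pi * (11 : ℝ) / 6 : ℝ) : ℂ) * Complex.I)
          + ((t 0 * r 0 : ℝ) : ℂ) *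
            Complex.exp (((Real.pi * (11 : ℝ) / 6 + Real.pi / 6 : ℝ) : ℂ) * Complex.I) := by
      have hexp2 : Complex.exp (((Real.pi * (11 : ℝ) / 6 + Real.pi / 6 : ℝ) : ℂ) * Complex.I)
          = 1 := by
        rw [show (((Real.pi * (11 : ℝ) / 6 + Real.pi / 6 : ℝ) : ℂ) * Complex.I)
            = 2 * (Real.pi : ℂ) * Complex.I by push_cast; ring]
        exact Complex.exp_two_pi_mul_I
      have hexp0 : Complex.exp (((Real.pi * ((0 : ℕ) : ℝ) / 6 : ℝ) : ℂ) * Complex.I) = 1 := by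
        norm_num
      rw [hexp2, hp]
      norm_num at e0 h1 e1
      push_cast at h1 h0 e1 ⊢
      linear_combination h0 - h1 + ((t 0 : ℂ)) * e0 + (1 - (t 11 : ℂ)) * e1 - hv
    rw [hz]
    exact key12 _ _ _ (mul_nonneg (by linarith [(hpf 11 (by norm_num)), (ht 11 (by norm_num)).2.1]) (hr 11 (by norm_num)))
      (mul_nonneg (ht 0 (by norm_num)).1 (hr 0 (by norm_num)))
  have h0 := hd 0 (by norm_num)
  have h1 := hd 1 (by norm_num)
  have h2 := hd 2 (by norm_num)
  have h3 := hd 3 (by norm_num)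
  have h4 := hd 4 (by norm_num)
  have h5 := hd 5 (by norm_num)
  have h6 := hd 6 (by norm_num)
  have h7 := hd 7 (by norm_num)
  have h8 := hd 8 (by norm_num)
  have h9 := hd 9 (by norm_num)
  have h10 := hd 10 (by norm_num)
  simp only [Finset.sum_range_succ, Finset.sum_range_zero] at *
  norm_num at *
  linarith [h0, h1, h2, h3, h4, h5, h6, h7, h8, h9, h10, hd11]
end
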